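/- arXiv:1509.04679 — 3 statements merged into one kernel-verified Lean document; each statement's English description precedes it below -/
import Mathlib

section
/- Let N be a normal subsystem of the coefficient system A (i.e., N_σ ⊴ A_σ for all σ, preserved by the connecting maps). Then the group H^0(X, A/N) acts on the set H^1(X, N) via [n]^{ā} = [n^a] for any lift a of ā, this action is well defined, and its orbits are precisely the fibers of the natural map i_1: H^1(X,N) → H^1(X,A) sending each C^0(N)-orbit of Z^1(X,N) to the C^0(A)-orbit containing it. -/
/-- The coboundary map `d₀ : C⁰ → C¹`. -/
def d0 {A : Finset ℕ → Type*} [∀ σ, Group (A σ)]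
    (α : ∀ σ τ : Finset ℕ, σ ⊆ τ → (A σ →* A τ))
    (a : ∀ i : ℕ, A {i}) (i j : ℕ) : A {i, j} :=
  α {j} {i, j} (by simp) ((a j)⁻¹) * α {i} {i, j} (by simp) (a i)

/-- The coboundary map `d₁ : C¹ → C²`. -/
def d1 {A : Finset ℕ → Type*} [∀ σ, Group (A σ)]
    (α : ∀ σ τ : Finset ℕ, σ ⊆ τ → (A σ →* A τ))
    (b : ∀ i j : ℕ, A {i, j}) (i j k : ℕ) : A {i, j, k} :=
  α {j, k} {i, j, k} (by simp [Finset.insert_subset_iff]) ((b j k)⁻¹) *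
    α {i, k} {i, j, k} (by simp [Finset.insert_subset_iff]) (b i k) *
    α {i, j} {i, j, k} (by simp [Finset.insert_subset_iff]) ((b i j)⁻¹)

/-- The right action of `C⁰` on `C¹`. -/
def act {A : Finset ℕ → Type*} [∀ σ, Group (A σ)]
    (α : ∀ σ τ : Finset ℕ, σ ⊆ τ → (A σ →* A τ))
    (b : ∀ i j : ℕ, A {i, j}) (a : ∀ i : ℕ, A {i}) (i j : ℕ) : A {i, j} :=
  α {j} {i, j} (by simp) ((a j)⁻¹) * b i j * α {i} {i, j} (by simp) (a i)

section
variable {A : Finset ℕ → Type*} [∀ σ, Group (A σ)]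
variable (S : Set (Finset ℕ)) (α : ∀ σ τ : Finset ℕ, σ ⊆ τ → (A σ →* A τ))
variable (N : ∀ σ, Subgroup (A σ))

/-- `z ∈ Z¹(X,𝒜)`: the 1-cocycle condition. -/
def IsCocycle (z : ∀ i j : ℕ, A {i, j}) : Prop :=
  ∀ i j k : ℕ, i < j → j < k → ({i, j, k} : Finset ℕ) ∈ S → d1 α z i j k = 1

/-- a 1-cochain has all its values in the normal subsystem `𝒩`. -/
def InN1 (z : ∀ i j : ℕ, A {i, j}) : Prop :=
  ∀ i j : ℕ, i < j → ({i, j} : Finset ℕ) ∈ S → z i j ∈ N {i, j}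

/-- a 0-cochain has all its values in the normal subsystem `𝒩`, i.e. lies in `C⁰(𝒩)`. -/
def InN0 (m : ∀ i : ℕ, A {i}) : Prop :=
  ∀ i : ℕ, ({i} : Finset ℕ) ∈ S → m i ∈ N {i}

/-- two `𝒩`-valued 1-cochains are in the same `C⁰(𝒩)`-orbit, i.e. represent the
same class in `H¹(X,𝒩)`. -/
def RelN (z z' : ∀ i j : ℕ, A {i, j}) : Prop :=
  ∃ m : ∀ i : ℕ, A {i}, InN0 S N m ∧
    ∀ i j : ℕ, i < j → ({i, j} : Finset ℕ) ∈ S → z' i j = act α z m i j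

/-- a 0-cochain with values in `𝒜` represents an element of `Z⁰(X, 𝒜/𝒩)`,
i.e. an element of `H⁰(X, 𝒜/𝒩)`. -/
def IsH0Bar (a : ∀ i : ℕ, A {i}) : Prop :=
  ∀ i j : ℕ, i < j → ({i, j} : Finset ℕ) ∈ S → d0 α a i j ∈ N {i, j}

end

/-- for a normal subsystem `𝒩 ⊴ 𝒜`, the group `H⁰(X,𝒜/𝒩)` acts on
`H¹(X,𝒩)` by `[n]^{ā} = [nᵃ]` for any lift `a` of `ā`; this is well defined
(independent of the representative `n` and of the lift of `ā`, and keeps the class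
inside `H¹(X,𝒩)`), and its orbits are exactly the fibers of the natural map
`i₁ : H¹(X,𝒩) → H¹(X,𝒜)`. -/
theorem H0_quotient_acts_on_H1_of_normal_subsystem
    (S : Set (Finset ℕ))
    (hdown : ∀ τ ∈ S, ∀ σ : Finset ℕ, σ ⊆ τ → σ ∈ S)
    (A : Finset ℕ → Type*) [∀ σ, Group (A σ)]
    (α : ∀ σ τ : Finset ℕ, σ ⊆ τ → (A σ →* A τ))
    (hcomp : ∀ (σ ρ τ : Finset ℕ) (h1 : σ ⊆ ρ) (h2 : ρ ⊆ τ),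
      σ ∈ S → ρ ∈ S → τ ∈ S →
      ∀ x : A σ, α σ τ (h1.trans h2) x = α ρ τ h2 (α σ ρ h1 x))
    (N : ∀ σ, Subgroup (A σ))
    (hnormal : ∀ σ ∈ S, (N σ).Normal)
    (hmap : ∀ (σ τ : Finset ℕ) (h : σ ⊆ τ), σ ∈ S → τ ∈ S →
      ∀ x ∈ N σ, α σ τ h x ∈ N τ) :
    -- the action preserves 𝒩-valued cocycles
    (∀ (a : ∀ i : ℕ, A {i}) (n : ∀ i j : ℕ, A {i, j}),
      IsH0Bar S α N a → InN1 S N n →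
      InN1 S N (act α n a) ∧ (IsCocycle S α n → IsCocycle S α (act α n a))) ∧
    -- well-definedness: changing the lift `a` by `m ∈ C⁰(𝒩)` and the
    -- representative `n` within its class gives the same class `[nᵃ]`
    (∀ (a m : ∀ i : ℕ, A {i}) (n n' : ∀ i j : ℕ, A {i, j}),
      IsH0Bar S α N a → InN0 S N m → RelN S α N n n' →
      RelN S α N (act α n a) (act α n' (fun i => a i * m i))) ∧
    -- the orbits are precisely the fibers of `i₁ : H¹(X,𝒩) → H¹(X,𝒜)`
    (∀ n n' : ∀ i j : ℕ, A {i, j},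
      IsCocycle S α n → InN1 S N n → IsCocycle S α n' → InN1 S N n' →
      ((∃ c : ∀ i : ℕ, A {i}, ∀ i j : ℕ, i < j → ({i, j} : Finset ℕ) ∈ S →
          n' i j = act α n c i j) ↔
        (∃ a : ∀ i : ℕ, A {i}, IsH0Bar S α N a ∧ RelN S α N (act α n a) n'))) := by

  have hsub2 : ∀ i j : ℕ, ({i} : Finset ℕ) ⊆ {i, j} := by intro i j; simp
  have hsub2' : ∀ i j : ℕ, ({j} : Finset ℕ) ⊆ {i, j} := by intro i j; simp
  refine ⟨?_, ?_, ?_⟩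
  · -- part 1
    intro a n ha hn
    constructor
    · intro i j hij hS
      have key : act α n a i j =
          ((α {j} {i, j} (by simp) (a j))⁻¹ * n i j * α {j} {i, j} (by simp) (a j)) *
            d0 α a i j := by
        simp only [act, d0, map_inv]
        group
      rw [key]
      refine mul_mem ?_ (ha i j hij hS)
      simpa using (hnormal _ hS).conj_mem _ (hn i j hij hS) (α {j} {i, j} (by simp) (a j))⁻¹
    · intro hz i j k hij hjk hS
      have hiS : ({i} : Finset ℕ) ∈ S := hdown _ hS _ (by simp [Finset.insert_subset_iff])
      have hjS : ({j} : Finset ℕ) ∈ S := hdown _ hS _ (by simp [Finset.insert_subset_iff])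
      have hkS : ({k} : Finset ℕ) ∈ S := hdown _ hS _ (by simp [Finset.insert_subset_iff])
      have hijS : ({i, j} : Finset ℕ) ∈ S := hdown _ hS _ (by simp [Finset.insert_subset_iff])
      have hikS : ({i, k} : Finset ℕ) ∈ S := hdown _ hS _ (by simp [Finset.insert_subset_iff])
      have hjkS : ({j, k} : Finset ℕ) ∈ S := hdown _ hS _ (by simp [Finset.insert_subset_iff])
      have key : d1 α (act α n a) i j k =
          (α {j} {i, j, k} (by simp [Finset.insert_subset_iff]) (a j))⁻¹ *
            d1 α n i j k *
            α {j} {i, j, k} (by simp [Finset.insert_subset_iff]) (a j) := by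
        simp only [d1, act, map_inv, map_mul, mul_inv_rev, inv_inv]
        rw [← hcomp {j} {j, k} {i, j, k} (by simp) (by simp [Finset.insert_subset_iff])
              hjS hjkS hS (a j),
            ← hcomp {k} {j, k} {i, j, k} (by simp) (by simp [Finset.insert_subset_iff])
              hkS hjkS hS (a k),
            ← hcomp {k} {i, k} {i, j, k} (by simp) (by simp [Finset.insert_subset_iff])
              hkS hikS hS (a k),
            ← hcomp {i} {i, k} {i, j, k} (by simp) (by simp [Finset.insert_subset_iff])
              hiS hikS hS (a i),
            ← hcomp {i} {i, j} {i, j, k} (by simp) (by simp [Finset.insert_subset_iff])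
              hiS hijS hS (a i),
            ← hcomp {j} {i, j} {i, j, k} (by simp) (by simp [Finset.insert_subset_iff])
              hjS hijS hS (a j)]
        group
      rw [key, hz i j k hij hjk hS]
      group
  · -- part 2: well-definedness
    rintro a m n n' ha hm ⟨m₀, hm₀, he⟩
    refine ⟨fun i => (a i)⁻¹ * m₀ i * a i * m i, ?_, ?_⟩
    · intro i hiS
      refine mul_mem ?_ (hm i hiS)
      simpa using (hnormal _ hiS).conj_mem _ (hm₀ i hiS) (a i)⁻¹
    · intro i j hij hS
      simp only [act, map_inv, map_mul, mul_inv_rev, inv_inv]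
      rw [he i j hij hS]
      simp only [act, map_inv, map_mul, mul_inv_rev, inv_inv]
      group
  · -- part 3: orbits are fibers
    intro n n' hzn hn hzn' hn'
    constructor
    · rintro ⟨c, hc⟩
      refine ⟨c, ?_, fun _ => 1, fun i _ => one_mem _, ?_⟩
      · intro i j hij hS
        have key : d0 α c i j =
            ((α {j} {i, j} (by simp) (c j))⁻¹ * (n i j)⁻¹ * α {j} {i, j} (by simp) (c j)) *
              n' i j := by
          rw [hc i j hij hS]
          simp only [d0, act, map_inv]
          group
        rw [key]
        refine mul_mem ?_ (hn' i j hij hS)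
        simpa using (hnormal _ hS).conj_mem _ (inv_mem (hn i j hij hS))
          (α {j} {i, j} (by simp) (c j))⁻¹
      · intro i j hij hS
        simp only [act, inv_one, map_one, one_mul, mul_one]
        exact hc i j hij hS
    · rintro ⟨a, ha, m, hm, he⟩
      refine ⟨fun i => a i * m i, ?_⟩
      intro i j hij hS
      rw [he i j hij hS]
      simp only [act, map_inv, map_mul, mul_inv_rev, inv_inv]
      group
end

section
/- Every amalgam of type G_0 over X is isomorphic to a normalized amalgam, where normalized means that for every simplex τ of rank ≥ 1, the inclusion map φ^{τ̄}_τ equals the reference map ψ^{τ̄}_τ, τ̄ being the least maximal proper face of τ in the ordering induced by the vertex ordering. -/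
section
variable (G : Finset ℕ → Type*) [∀ σ, Group (G σ)]

/-- `φ` is (the family of connecting maps of) a simplicial amalgam on the
simplicial complex with simplex set `S`, with groups `G_σ`. -/
structure IsAmalgam (S : Set (Finset ℕ))
    (φ : ∀ σ τ : Finset ℕ, σ ⊆ τ → (G τ →* G σ)) : Prop where
  inj : ∀ (σ τ : Finset ℕ) (h : σ ⊆ τ), σ ∈ S → τ ∈ S →
    Function.Injective (φ σ τ h)
  comp : ∀ (σ ρ τ : Finset ℕ) (h1 : σ ⊆ ρ) (h2 : ρ ⊆ τ),
    σ ∈ S → ρ ∈ S → τ ∈ S →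
    ∀ x : G τ, φ σ τ (h1.trans h2) x = φ σ ρ h1 (φ ρ τ h2 x)

/-- `φ` is an amalgam of type `𝒢₀ = {G_σ, ψ}`: same groups, and the connecting
maps have the same images `Ḡ_{σ,τ} = ψ^σ_τ(G_τ)`. -/
structure IsAmalgamOfType (S : Set (Finset ℕ))
    (ψ φ : ∀ σ τ : Finset ℕ, σ ⊆ τ → (G τ →* G σ)) : Prop where
  isAmalgam : IsAmalgam G S φ
  range_eq : ∀ (σ τ : Finset ℕ) (h : σ ⊆ τ), σ ∈ S → τ ∈ S →
    Set.range (φ σ τ h) = Set.range (ψ σ τ h)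

/-- `φ` is normalized (w.r.t. the reference amalgam `ψ`): for every simplex `τ`
of rank `≥ 1`, `φ^{τ̄}_τ = ψ^{τ̄}_τ`, where `τ̄` is `τ` minus its largest vertex. -/
def IsNormalized (S : Set (Finset ℕ))
    (ψ φ : ∀ σ τ : Finset ℕ, σ ⊆ τ → (G τ →* G σ)) : Prop :=
  ∀ (τ : Finset ℕ) (hne : τ.Nonempty), τ ∈ S → 2 ≤ τ.card →
    φ (τ.erase (τ.max' hne)) τ (Finset.erase_subset _ _) =
      ψ (τ.erase (τ.max' hne)) τ (Finset.erase_subset _ _)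

/-- `e` is an isomorphism from the amalgam `φ1` to the amalgam `φ2`. -/
def IsAmalgamIso (S : Set (Finset ℕ))
    (φ1 φ2 : ∀ σ τ : Finset ℕ, σ ⊆ τ → (G τ →* G σ))
    (e : ∀ σ, G σ ≃* G σ) : Prop :=
  ∀ (σ τ : Finset ℕ) (h : σ ⊆ τ), σ ∈ S → τ ∈ S →
    ∀ x : G τ, e σ (φ1 σ τ h x) = φ2 σ τ h (e τ x)

end

open Classical in
noncomputable def Efun (S : Set (Finset ℕ)) (G : Finset ℕ → Type*) [∀ σ, Group (G σ)]
    (ψ φ : ∀ σ τ : Finset ℕ, σ ⊆ τ → (G τ →* G σ)) :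
    (σ : Finset ℕ) → G σ → G σ := fun σ =>
  if h : σ ∈ S ∧ 2 ≤ σ.card then
    have hne : σ.Nonempty := Finset.card_pos.mp (by omega)
    fun x => Function.invFun (ψ (σ.erase (σ.max' hne)) σ (Finset.erase_subset _ _))
      (Efun S G ψ φ (σ.erase (σ.max' hne))
        (φ (σ.erase (σ.max' hne)) σ (Finset.erase_subset _ _) x))
  else fun x => x
termination_by σ => σ.card
decreasing_by
  exact Finset.card_erase_lt_of_mem (Finset.max'_mem _ _)

theorem Efun_key (S : Set (Finset ℕ))
    (hdown : ∀ τ ∈ S, ∀ σ : Finset ℕ, σ.Nonempty → σ ⊆ τ → σ ∈ S)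
    (G : Finset ℕ → Type*) [∀ σ, Group (G σ)]
    (ψ : ∀ σ τ : Finset ℕ, σ ⊆ τ → (G τ →* G σ))
    (hψ : IsAmalgam G S ψ)
    (φ : ∀ σ τ : Finset ℕ, σ ⊆ τ → (G τ →* G σ))
    (hφ : IsAmalgamOfType G S ψ φ) :
    ∀ (n : ℕ) (σ : Finset ℕ), σ.card = n → σ ∈ S →
      (∀ x y : G σ, Efun S G ψ φ σ (x * y) = Efun S G ψ φ σ x * Efun S G ψ φ σ y) ∧
      Function.Bijective (Efun S G ψ φ σ) ∧
      (∀ (τ : Finset ℕ) (h : σ ⊆ τ), τ ∈ S →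
        ∀ x : G τ, ∃ y : G τ, Efun S G ψ φ σ (φ σ τ h x) = ψ σ τ h y) ∧
      (∀ (τ : Finset ℕ) (h : σ ⊆ τ), τ ∈ S →
        ∀ y : G τ, ∃ x : G τ, ψ σ τ h y = Efun S G ψ φ σ (φ σ τ h x)) := by
  intro n
  induction n using Nat.strong_induction_on with
  | _ n IH =>
    intro σ hcard hσ
    by_cases h2 : 2 ≤ σ.card
    · -- recursive case
      have hne : σ.Nonempty := Finset.card_pos.mp (by omega)
      set σ' := σ.erase (σ.max' hne) with hσ'def
      have h' : σ' ⊆ σ := Finset.erase_subset _ _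
      have hcard' : σ'.card = σ.card - 1 :=
        Finset.card_erase_of_mem (Finset.max'_mem _ _)
      have hne' : σ'.Nonempty := Finset.card_pos.mp (by omega)
      have hσ'S : σ' ∈ S := hdown σ hσ σ' hne' h'
      obtain ⟨hom', bij', inv1', inv2'⟩ :=
        IH σ'.card (by omega) σ' rfl hσ'S
      have ψinj : Function.Injective (ψ σ' σ h') := hψ.inj σ' σ h' hσ'S hσ
      have E1 : ∀ x : G σ, ψ σ' σ h' (Efun S G ψ φ σ x)
          = Efun S G ψ φ σ' (φ σ' σ h' x) := by
        intro x
        conv_lhs => rw [Efun]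
        rw [dif_pos ⟨hσ, h2⟩]
        obtain ⟨y, hy⟩ := inv1' σ h' hσ x
        exact Function.invFun_eq ⟨y, hy.symm⟩
      have hom : ∀ x y : G σ,
          Efun S G ψ φ σ (x * y) = Efun S G ψ φ σ x * Efun S G ψ φ σ y := by
        intro x y
        apply ψinj
        rw [E1, map_mul, map_mul, hom', ← E1, ← E1]
      have hinj : Function.Injective (Efun S G ψ φ σ) := by
        intro a b hab
        have hab2 := congrArg (ψ σ' σ h') hab
        rw [E1, E1] at hab2
        exact hφ.isAmalgam.inj σ' σ h' hσ'S hσ (bij'.1 hab2)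
      have hsurj : Function.Surjective (Efun S G ψ φ σ) := by
        intro y
        obtain ⟨x, hx⟩ := inv2' σ h' hσ y
        exact ⟨x, ψinj (by rw [E1]; exact hx.symm)⟩
      refine ⟨hom, ⟨hinj, hsurj⟩, ?_, ?_⟩
      · intro τ h hτ x
        obtain ⟨y, hy⟩ := inv1' τ (h'.trans h) hτ x
        refine ⟨y, ψinj ?_⟩
        rw [E1, ← hφ.isAmalgam.comp σ' σ τ h' h hσ'S hσ hτ x, hy,
          ← hψ.comp σ' σ τ h' h hσ'S hσ hτ y]
      · intro τ h hτ y
        obtain ⟨x, hx⟩ := inv2' τ (h'.trans h) hτ y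
        refine ⟨x, ψinj ?_⟩
        rw [E1, ← hψ.comp σ' σ τ h' h hσ'S hσ hτ y, hx,
          ← hφ.isAmalgam.comp σ' σ τ h' h hσ'S hσ hτ x]
    · -- base case: Efun σ = id
      have hid : ∀ x : G σ, Efun S G ψ φ σ x = x := by
        intro x; rw [Efun]; simp [h2]
      refine ⟨fun x y => by rw [hid, hid, hid],
        ⟨fun a b hab => by rwa [hid, hid] at hab, fun y => ⟨y, hid y⟩⟩, ?_, ?_⟩
      · intro τ h hτ x
        have : φ σ τ h x ∈ Set.range (ψ σ τ h) := by
          rw [← hφ.range_eq σ τ h hσ hτ]; exact ⟨x, rfl⟩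
        obtain ⟨y, hy⟩ := this
        exact ⟨y, by rw [hid, hy]⟩
      · intro τ h hτ y
        have : ψ σ τ h y ∈ Set.range (φ σ τ h) := by
          rw [hφ.range_eq σ τ h hσ hτ]; exact ⟨y, rfl⟩
        obtain ⟨x, hx⟩ := this
        exact ⟨x, by rw [hid, hx]⟩

/-- every amalgam of type `𝒢₀` over `X` is isomorphic to a
normalized amalgam of type `𝒢₀`. -/
theorem amalgam_isomorphic_to_normalized
    (S : Set (Finset ℕ))
    (hdown : ∀ τ ∈ S, ∀ σ : Finset ℕ, σ.Nonempty → σ ⊆ τ → σ ∈ S)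
    (G : Finset ℕ → Type*) [∀ σ, Group (G σ)]
    (ψ : ∀ σ τ : Finset ℕ, σ ⊆ τ → (G τ →* G σ))
    (hψ : IsAmalgam G S ψ)
    (φ : ∀ σ τ : Finset ℕ, σ ⊆ τ → (G τ →* G σ))
    (hφ : IsAmalgamOfType G S ψ φ) :
    ∃ χ : ∀ σ τ : Finset ℕ, σ ⊆ τ → (G τ →* G σ),
      IsAmalgamOfType G S ψ χ ∧ IsNormalized G S ψ χ ∧
      ∃ e : ∀ σ, G σ ≃* G σ, IsAmalgamIso G S φ χ e := by
  classical
  have key := Efun_key S hdown G ψ hψ φ hφ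
  have hall : ∀ σ : Finset ℕ,
      (∀ x y : G σ, Efun S G ψ φ σ (x * y) = Efun S G ψ φ σ x * Efun S G ψ φ σ y) ∧
      Function.Bijective (Efun S G ψ φ σ) := by
    intro σ
    by_cases hσ : σ ∈ S
    · exact ⟨(key σ.card σ rfl hσ).1, (key σ.card σ rfl hσ).2.1⟩
    · have hid : ∀ x : G σ, Efun S G ψ φ σ x = x := by
        intro x; rw [Efun]; simp [hσ]
      exact ⟨fun x y => by rw [hid, hid, hid],
        fun a b hab => by rwa [hid, hid] at hab, fun y => ⟨y, hid y⟩⟩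
  set e : ∀ σ : Finset ℕ, G σ ≃* G σ :=
    fun σ => MulEquiv.mk' (Equiv.ofBijective _ (hall σ).2) (hall σ).1 with he
  have hecoe : ∀ (σ : Finset ℕ) (x : G σ), e σ x = Efun S G ψ φ σ x := fun _ _ => rfl
  set χ : ∀ σ τ : Finset ℕ, σ ⊆ τ → (G τ →* G σ) :=
    fun σ τ h => ((e σ).toMonoidHom.comp (φ σ τ h)).comp (e τ).symm.toMonoidHom with hχ
  have hχcoe : ∀ (σ τ : Finset ℕ) (h : σ ⊆ τ) (x : G τ),
      χ σ τ h x = e σ (φ σ τ h ((e τ).symm x)) := fun _ _ _ _ => rfl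
  refine ⟨χ, ⟨⟨?_, ?_⟩, ?_⟩, ?_, e, ?_⟩
  · -- injectivity
    intro σ τ h hσ hτ
    exact ((e σ).injective.comp (hφ.isAmalgam.inj σ τ h hσ hτ)).comp (e τ).symm.injective
  · -- compatibility
    intro σ ρ τ h1 h2 hσ hρ hτ x
    rw [hχcoe, hχcoe, hχcoe, MulEquiv.symm_apply_apply,
      hφ.isAmalgam.comp σ ρ τ h1 h2 hσ hρ hτ]
  · -- range equality
    intro σ τ h hσ hτ
    ext z
    constructor
    · rintro ⟨x, rfl⟩
      obtain ⟨y, hy⟩ := (key σ.card σ rfl hσ).2.2.1 τ h hτ ((e τ).symm x)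
      exact ⟨y, by rw [hχcoe, hecoe, hy]⟩
    · rintro ⟨y, rfl⟩
      obtain ⟨x, hx⟩ := (key σ.card σ rfl hσ).2.2.2 τ h hτ y
      exact ⟨e τ x, by rw [hχcoe, MulEquiv.symm_apply_apply, hecoe, ← hx]⟩
  · -- normalization
    intro τ hne hτ h2
    have hcard' : (τ.erase (τ.max' hne)).card = τ.card - 1 :=
      Finset.card_erase_of_mem (Finset.max'_mem _ _)
    have hne' : (τ.erase (τ.max' hne)).Nonempty := Finset.card_pos.mp (by omega)
    have hτ'S : τ.erase (τ.max' hne) ∈ S :=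
      hdown τ hτ _ hne' (Finset.erase_subset _ _)
    have E1 : ∀ x : G τ, ψ (τ.erase (τ.max' hne)) τ (Finset.erase_subset _ _)
        (Efun S G ψ φ τ x)
        = Efun S G ψ φ (τ.erase (τ.max' hne))
            (φ (τ.erase (τ.max' hne)) τ (Finset.erase_subset _ _) x) := by
      intro x
      conv_lhs => rw [Efun]
      rw [dif_pos ⟨hτ, h2⟩]
      obtain ⟨y, hy⟩ := (key (τ.erase (τ.max' hne)).card _ rfl hτ'S).2.2.1 τ
        (Finset.erase_subset _ _) hτ x
      exact Function.invFun_eq ⟨y, hy.symm⟩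
    ext x
    have hx : Efun S G ψ φ τ ((e τ).symm x) = x := (e τ).apply_symm_apply x
    rw [hχcoe, hecoe, ← E1, hx]
  · -- isomorphism
    intro σ τ h hσ hτ x
    rw [hχcoe, MulEquiv.symm_apply_apply]
end

section
/- Let X be the 1-simplex with vertices 1,2 and let G_0 = {G_1, G_2, G_12; ψ^1, ψ^2} be an amalgam over X. Let A_i = {g ∈ Aut(G_i) : g(ψ^i(G_12)) = ψ^i(G_12)} for i=1,2, A_12 = Aut(G_12), and Ā_i = ad(ψ^i)(A_i) ≤ A_12. Then the isomorphism classes of amalgams of type G_0 are in bijection with the double cosets Ā_2 \ A_12 / Ā_1. -/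
section
variable (G1 G2 G12 : Type*) [Group G1] [Group G2] [Group G12]

/-- An amalgam of type `𝒢₀ = {G₁, G₂, G₁₂; ψ¹, ψ²}`: the same three groups,
with injective connecting maps having the same images as `ψ¹, ψ²`. -/
structure EdgeAmalgamOfType (ψ1 : G12 →* G1) (ψ2 : G12 →* G2) where
  φ1 : G12 →* G1
  φ2 : G12 →* G2
  inj1 : Function.Injective φ1
  inj2 : Function.Injective φ2
  range1 : Set.range φ1 = Set.range ψ1
  range2 : Set.range φ2 = Set.range ψ2

/-- Isomorphism of two amalgams over the 1-simplex. -/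
def EdgeAmalgamIso (ψ1 : G12 →* G1) (ψ2 : G12 →* G2)
    (A B : EdgeAmalgamOfType G1 G2 G12 ψ1 ψ2) : Prop :=
  ∃ (e1 : G1 ≃* G1) (e2 : G2 ≃* G2) (e12 : G12 ≃* G12),
    (∀ x : G12, e1 (A.φ1 x) = B.φ1 (e12 x)) ∧
    (∀ x : G12, e2 (A.φ2 x) = B.φ2 (e12 x))

/-- `Ā₁ = ad(ψ¹)(A₁) ≤ A₁₂ = Aut(G₁₂)`, where
`A₁ = {f ∈ Aut(G₁) : f(ψ¹(G₁₂)) = ψ¹(G₁₂)}` and `ad(ψ¹)(f) = (ψ¹)⁻¹∘f∘ψ¹`. -/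
def Abar1 (ψ1 : G12 →* G1) : Set (MulAut G12) :=
  {b | ∃ f : MulAut G1,
    ((f : G1 → G1) '' Set.range ψ1 = Set.range ψ1) ∧
    ∀ x : G12, ψ1 (b x) = f (ψ1 x)}

/-- `Ā₂ = ad(ψ²)(A₂) ≤ A₁₂ = Aut(G₁₂)`. -/
def Abar2 (ψ2 : G12 →* G2) : Set (MulAut G12) :=
  {b | ∃ f : MulAut G2,
    ((f : G2 → G2) '' Set.range ψ2 = Set.range ψ2) ∧
    ∀ x : G12, ψ2 (b x) = f (ψ2 x)}

end


namespace GoldschmidtAux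

section transfer
variable {G H : Type*} [Group G] [Group H]

/-- Given injective homs `f, g` with equal ranges, the automorphism `f⁻¹ ∘ g`. -/
noncomputable def transfer (f g : G →* H) (hf : Function.Injective f)
    (hg : Function.Injective g) (h : Set.range g = Set.range f) : MulAut G :=
  (MonoidHom.ofInjective hg).trans
    ((MulEquiv.subgroupCongr (SetLike.ext' (by simpa using h))).trans
      (MonoidHom.ofInjective hf).symm)

lemma transfer_spec (f g : G →* H) (hf : Function.Injective f)
    (hg : Function.Injective g) (h : Set.range g = Set.range f) (x : G) :
    f (transfer f g hf hg h x) = g x := by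
  simp only [transfer, MulEquiv.trans_apply]
  rw [MonoidHom.apply_ofInjective_symm, MulEquiv.subgroupCongr_apply,
    MonoidHom.ofInjective_apply]

end transfer

section main
variable {G1 G2 G12 : Type*} [Group G1] [Group G2] [Group G12]
  (ψ1 : G12 →* G1) (ψ2 : G12 →* G2)
  (hψ1 : Function.Injective ψ1) (hψ2 : Function.Injective ψ2)

/-- `α_A = φ₁⁻¹ ∘ ψ₁`. -/
noncomputable def alphaA (A : EdgeAmalgamOfType G1 G2 G12 ψ1 ψ2) : MulAut G12 :=
  transfer A.φ1 ψ1 A.inj1 hψ1 A.range1.symm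

lemma alphaA_spec (A : EdgeAmalgamOfType G1 G2 G12 ψ1 ψ2) (x : G12) :
    A.φ1 (alphaA ψ1 ψ2 hψ1 A x) = ψ1 x :=
  transfer_spec _ _ _ _ _ x

lemma alphaA_unique (A : EdgeAmalgamOfType G1 G2 G12 ψ1 ψ2) (c : MulAut G12)
    (hc : ∀ x, A.φ1 (c x) = ψ1 x) : c = alphaA ψ1 ψ2 hψ1 A :=
  MulEquiv.ext fun x => A.inj1 (by rw [hc, alphaA_spec])

/-- `β_A = φ₂⁻¹ ∘ ψ₂`. -/
noncomputable def betaA (A : EdgeAmalgamOfType G1 G2 G12 ψ1 ψ2) : MulAut G12 :=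
  transfer A.φ2 ψ2 A.inj2 hψ2 A.range2.symm

lemma betaA_spec (A : EdgeAmalgamOfType G1 G2 G12 ψ1 ψ2) (x : G12) :
    A.φ2 (betaA ψ1 ψ2 hψ2 A x) = ψ2 x :=
  transfer_spec _ _ _ _ _ x

lemma betaA_unique (A : EdgeAmalgamOfType G1 G2 G12 ψ1 ψ2) (c : MulAut G12)
    (hc : ∀ x, A.φ2 (c x) = ψ2 x) : c = betaA ψ1 ψ2 hψ2 A :=
  MulEquiv.ext fun x => A.inj2 (by rw [hc, betaA_spec])

/-- The invariant of an amalgam: `β⁻¹ * α`. -/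
noncomputable def Finv (A : EdgeAmalgamOfType G1 G2 G12 ψ1 ψ2) : MulAut G12 :=
  (betaA ψ1 ψ2 hψ2 A)⁻¹ * alphaA ψ1 ψ2 hψ1 A

/-- The normalized amalgam associated to `b : MulAut G12`. -/
def Gam (b : MulAut G12) : EdgeAmalgamOfType G1 G2 G12 ψ1 ψ2 where
  φ1 := ψ1.comp (b⁻¹ : MulAut G12).toMonoidHom
  φ2 := ψ2
  inj1 := fun x y hxy => (b⁻¹ : MulAut G12).injective (hψ1 hxy)
  inj2 := hψ2
  range1 := by
    rw [MonoidHom.coe_comp, Set.range_comp, MulEquiv.coe_toMonoidHom,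
      Set.range_eq_univ.mpr (b⁻¹ : MulAut G12).surjective, Set.image_univ]
  range2 := rfl

lemma Gam_phi1 (b : MulAut G12) (x : G12) :
    (Gam ψ1 ψ2 hψ1 hψ2 b).φ1 x = ψ1 (b⁻¹ x) := rfl

lemma Finv_Gam (b : MulAut G12) : Finv ψ1 ψ2 hψ1 hψ2 (Gam ψ1 ψ2 hψ1 hψ2 b) = b := by
  have h1 : alphaA ψ1 ψ2 hψ1 (Gam ψ1 ψ2 hψ1 hψ2 b) = b :=
    (alphaA_unique ψ1 ψ2 hψ1 _ b fun x => by
      rw [Gam_phi1, MulAut.inv_apply_self]).symm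
  have h2 : betaA ψ1 ψ2 hψ2 (Gam ψ1 ψ2 hψ1 hψ2 b) = 1 :=
    (betaA_unique ψ1 ψ2 hψ2 _ 1 fun x => rfl).symm
  rw [Finv, h1, h2, inv_one, one_mul]

lemma iso_Gam_Finv (A : EdgeAmalgamOfType G1 G2 G12 ψ1 ψ2) :
    EdgeAmalgamIso G1 G2 G12 ψ1 ψ2 A
      (Gam ψ1 ψ2 hψ1 hψ2 (Finv ψ1 ψ2 hψ1 hψ2 A)) := by
  refine ⟨1, 1, ((betaA ψ1 ψ2 hψ2 A)⁻¹ : MulAut G12), fun x => ?_, fun x => ?_⟩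
  · rw [Gam_phi1]
    have key : (Finv ψ1 ψ2 hψ1 hψ2 A)⁻¹ ((betaA ψ1 ψ2 hψ2 A)⁻¹ x) =
        (alphaA ψ1 ψ2 hψ1 A)⁻¹ x := by
      rw [Finv, mul_inv_rev, inv_inv, MulAut.mul_apply, MulAut.apply_inv_self]
    rw [key]
    have h := alphaA_spec ψ1 ψ2 hψ1 A ((alphaA ψ1 ψ2 hψ1 A)⁻¹ x)
    rw [MulAut.apply_inv_self] at h
    simpa using h
  · show A.φ2 x = ψ2 ((betaA ψ1 ψ2 hψ2 A)⁻¹ x)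
    have h := betaA_spec ψ1 ψ2 hψ2 A ((betaA ψ1 ψ2 hψ2 A)⁻¹ x)
    rw [MulAut.apply_inv_self] at h
    exact h

lemma Finv_rel (A B : EdgeAmalgamOfType G1 G2 G12 ψ1 ψ2)
    (h : EdgeAmalgamIso G1 G2 G12 ψ1 ψ2 A B) :
    ∃ a1 ∈ Abar1 G1 G12 ψ1, ∃ a2 ∈ Abar2 G2 G12 ψ2,
      Finv ψ1 ψ2 hψ1 hψ2 B = a2 * Finv ψ1 ψ2 hψ1 hψ2 A * a1 := by
  obtain ⟨e1, e2, e12, h1, h2⟩ := h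
  have he1img : (⇑e1) '' Set.range ψ1 = Set.range ψ1 :=
    calc (⇑e1) '' Set.range ψ1 = (⇑e1) '' Set.range A.φ1 := by rw [A.range1]
      _ = Set.range (⇑e1 ∘ ⇑A.φ1) := (Set.range_comp _ _).symm
      _ = Set.range (⇑B.φ1 ∘ ⇑e12) :=
          congrArg Set.range (funext h1 : ⇑e1 ∘ ⇑A.φ1 = ⇑B.φ1 ∘ ⇑e12)
      _ = Set.range ⇑B.φ1 := by
          rw [Set.range_comp, Set.range_eq_univ.mpr e12.surjective, Set.image_univ]
      _ = Set.range ψ1 := B.range1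
  have he2img : (⇑e2) '' Set.range ψ2 = Set.range ψ2 :=
    calc (⇑e2) '' Set.range ψ2 = (⇑e2) '' Set.range A.φ2 := by rw [A.range2]
      _ = Set.range (⇑e2 ∘ ⇑A.φ2) := (Set.range_comp _ _).symm
      _ = Set.range (⇑B.φ2 ∘ ⇑e12) :=
          congrArg Set.range (funext h2 : ⇑e2 ∘ ⇑A.φ2 = ⇑B.φ2 ∘ ⇑e12)
      _ = Set.range ⇑B.φ2 := by
          rw [Set.range_comp, Set.range_eq_univ.mpr e12.surjective, Set.image_univ]
      _ = Set.range ψ2 := B.range2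
  set a1 : MulAut G12 := transfer ψ1 (e1.toMonoidHom.comp ψ1) hψ1
    (e1.injective.comp hψ1)
    (by rw [MonoidHom.coe_comp, Set.range_comp, MulEquiv.coe_toMonoidHom, he1img])
    with ha1
  have ha1s : ∀ x, ψ1 (a1 x) = e1 (ψ1 x) := fun x => transfer_spec _ _ _ _ _ x
  set a2 : MulAut G12 := transfer ψ2 (e2.toMonoidHom.comp ψ2) hψ2
    (e2.injective.comp hψ2)
    (by rw [MonoidHom.coe_comp, Set.range_comp, MulEquiv.coe_toMonoidHom, he2img])
    with ha2
  have ha2s : ∀ x, ψ2 (a2 x) = e2 (ψ2 x) := fun x => transfer_spec _ _ _ _ _ x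
  have ha1inv : ∀ x, ψ1 (a1⁻¹ x) = e1⁻¹ (ψ1 x) := fun x => by
    apply e1.injective
    rw [← ha1s, MulAut.apply_inv_self, MulAut.apply_inv_self]
  have hm1 : a1⁻¹ ∈ Abar1 G1 G12 ψ1 := by
    refine ⟨e1⁻¹, ?_, ha1inv⟩
    conv_lhs => rw [← he1img, ← Set.image_comp]
    have hid : ⇑(e1⁻¹) ∘ ⇑e1 = id := funext fun x => by
      show (e1⁻¹ : MulAut G1) (e1 x) = x
      rw [MulAut.inv_apply_self]
    rw [hid, Set.image_id]
  have hm2 : a2 ∈ Abar2 G2 G12 ψ2 := ⟨e2, he2img, ha2s⟩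
  have hαB : alphaA ψ1 ψ2 hψ1 B = e12 * alphaA ψ1 ψ2 hψ1 A * a1⁻¹ := by
    refine (alphaA_unique ψ1 ψ2 hψ1 B _ fun x => ?_).symm
    rw [MulAut.mul_apply, MulAut.mul_apply, ← h1, alphaA_spec, ha1inv]
    show e1 ((e1⁻¹ : MulAut G1) (ψ1 x)) = ψ1 x
    rw [MulAut.apply_inv_self]
  have hβB : betaA ψ1 ψ2 hψ2 B = e12 * betaA ψ1 ψ2 hψ2 A * a2⁻¹ := by
    refine (betaA_unique ψ1 ψ2 hψ2 B _ fun x => ?_).symm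
    have hinv : ψ2 (a2⁻¹ x) = e2⁻¹ (ψ2 x) := by
      apply e2.injective
      rw [← ha2s, MulAut.apply_inv_self]
      show ψ2 x = e2 ((e2⁻¹ : MulAut G2) (ψ2 x))
      rw [MulAut.apply_inv_self]
    rw [MulAut.mul_apply, MulAut.mul_apply, ← h2, betaA_spec, hinv]
    show e2 ((e2⁻¹ : MulAut G2) (ψ2 x)) = ψ2 x
    rw [MulAut.apply_inv_self]
  refine ⟨a1⁻¹, hm1, a2, hm2, ?_⟩
  rw [Finv, Finv, hαB, hβB]
  group

lemma rel_Gam (b b' : MulAut G12)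
    (h : ∃ a1 ∈ Abar1 G1 G12 ψ1, ∃ a2 ∈ Abar2 G2 G12 ψ2, b' = a2 * b * a1) :
    EdgeAmalgamIso G1 G2 G12 ψ1 ψ2 (Gam ψ1 ψ2 hψ1 hψ2 b) (Gam ψ1 ψ2 hψ1 hψ2 b') := by
  obtain ⟨a1, ⟨f1, hf1img, hf1⟩, a2, ⟨f2, hf2img, hf2⟩, rfl⟩ := h
  refine ⟨f1⁻¹, f2, a2, fun x => ?_, fun x => ?_⟩
  · rw [Gam_phi1, Gam_phi1]
    have hb : ((a2 * b * a1)⁻¹ : MulAut G12) (a2 x) = a1⁻¹ (b⁻¹ x) := by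
      rw [mul_inv_rev, mul_inv_rev, MulAut.mul_apply, MulAut.mul_apply,
        MulAut.inv_apply_self]
    rw [hb]
    apply f1.injective
    show f1 ((f1⁻¹ : MulAut G1) (ψ1 (b⁻¹ x))) = f1 (ψ1 (a1⁻¹ (b⁻¹ x)))
    rw [MulAut.apply_inv_self, ← hf1, MulAut.apply_inv_self]
  · show f2 (ψ2 x) = ψ2 (a2 x)
    exact (hf2 x).symm

/-- The invariant as a map between the quotients. -/
noncomputable def Emap :
    Quot (EdgeAmalgamIso G1 G2 G12 ψ1 ψ2) ≃
      Quot (fun b b' : MulAut G12 =>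
        ∃ a1 ∈ Abar1 G1 G12 ψ1, ∃ a2 ∈ Abar2 G2 G12 ψ2, b' = a2 * b * a1) where
  toFun := Quot.lift (fun A => Quot.mk _ (Finv ψ1 ψ2 hψ1 hψ2 A))
    (fun A B h => Quot.sound (Finv_rel ψ1 ψ2 hψ1 hψ2 A B h))
  invFun := Quot.lift (fun b => Quot.mk _ (Gam ψ1 ψ2 hψ1 hψ2 b))
    (fun b b' h => Quot.sound (rel_Gam ψ1 ψ2 hψ1 hψ2 b b' h))
  left_inv := by
    refine Quot.ind fun A => ?_
    exact (Quot.sound (iso_Gam_Finv ψ1 ψ2 hψ1 hψ2 A)).symm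
  right_inv := by
    refine Quot.ind fun b => ?_
    show Quot.mk _ (Finv ψ1 ψ2 hψ1 hψ2 (Gam ψ1 ψ2 hψ1 hψ2 b)) = Quot.mk _ b
    rw [Finv_Gam]

end main
end GoldschmidtAux

/-- Goldschmidt's Lemma: the isomorphism classes of amalgams of
type `𝒢₀ = {G₁, G₂, G₁₂}` are in bijection with the double cosets
`Ā₂ \ A₁₂ / Ā₁`; the bijection sends the class of a normalized amalgam
(`φ² = ψ²`) to the double coset of `a₁₂ = (φ¹)⁻¹ ∘ ψ¹`. -/
theorem goldschmidt_lemma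
    (G1 G2 G12 : Type*) [Group G1] [Group G2] [Group G12]
    (ψ1 : G12 →* G1) (ψ2 : G12 →* G2)
    (hψ1 : Function.Injective ψ1) (hψ2 : Function.Injective ψ2) :
    ∃ E : Quot (EdgeAmalgamIso G1 G2 G12 ψ1 ψ2) ≃
          Quot (fun b b' : MulAut G12 =>
            ∃ a1 ∈ Abar1 G1 G12 ψ1, ∃ a2 ∈ Abar2 G2 G12 ψ2, b' = a2 * b * a1),
      ∀ (A : EdgeAmalgamOfType G1 G2 G12 ψ1 ψ2) (b : MulAut G12),
        A.φ2 = ψ2 → (∀ x : G12, A.φ1 (b x) = ψ1 x) →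
        E (Quot.mk _ A) = Quot.mk _ b := by
  refine ⟨GoldschmidtAux.Emap ψ1 ψ2 hψ1 hψ2, fun A b hA2 hA1 => ?_⟩
  show Quot.mk _ (GoldschmidtAux.Finv ψ1 ψ2 hψ1 hψ2 A) = Quot.mk _ b
  have hα : GoldschmidtAux.alphaA ψ1 ψ2 hψ1 A = b :=
    (GoldschmidtAux.alphaA_unique ψ1 ψ2 hψ1 A b hA1).symm
  have hβ : GoldschmidtAux.betaA ψ1 ψ2 hψ2 A = 1 :=
    (GoldschmidtAux.betaA_unique ψ1 ψ2 hψ2 A 1 fun x => by rw [hA2]; rfl).symm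
  rw [GoldschmidtAux.Finv, hα, hβ, inv_one, one_mul]
end
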